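/- Let f : 2^[3] → ℝ be defined by f(∅)=0, f(S)=0 for |S|=1, f(S)=1 for |S|=2, f({1,2,3})=1. Then f is ultra, but f is not supermodular, and for each pair i ≠ j in {1,2,3} there exists a price vector p ∈ ℝ³ such that D_f(p) = {∅, {i,j}} (so f is not GSC for any bipartition of {1,2,3}). -/

import Mathlib

set_option linter.unreachableTactic false
set_option linter.unusedTactic false

/-- The symmetric threshold function on three items is ultra, not supermodular,
and realizes complementarities between every pair (hence is not GSC). -/
theorem stmt7 (f : Finset (Fin 3) → ℝ)
    (hf : ∀ S, f S = if 2 ≤ S.card then 1 else 0) :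
    (∀ S T : Finset (Fin 3), S.card ≤ T.card → ∀ x ∈ S \ T, ∃ y ∈ T \ S,
        f S + f T ≤ f (insert y (S.erase x)) + f (insert x (T.erase y))) ∧
    (¬ ∀ S T : Finset (Fin 3), S ⊆ T → ∀ j ∉ T,
        f (insert j S) - f S ≤ f (insert j T) - f T) ∧
    (∀ i j : Fin 3, i ≠ j → ∃ p : Fin 3 → ℝ,
      ∀ S : Finset (Fin 3),
        (∀ T, f T - ∑ m ∈ T, p m ≤ f S - ∑ m ∈ S, p m) ↔ (S = ∅ ∨ S = {i, j})) := by
  refine ⟨?_, ?_, ?_⟩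
  · -- ultra: the swap preserves both cardinalities, so values are unchanged
    intro S T hST x hx
    rw [Finset.mem_sdiff] at hx
    have hTS : (T \ S).Nonempty := by
      rw [Finset.sdiff_nonempty]
      intro hsub
      have : S = T := Finset.eq_of_subset_of_card_le hsub hST |>.symm
      exact hx.2 (this ▸ hx.1)
    obtain ⟨y, hy⟩ := hTS
    refine ⟨y, hy, ?_⟩
    rw [Finset.mem_sdiff] at hy
    have hcS : (insert y (S.erase x)).card = S.card := by
      rw [Finset.card_insert_of_notMem (fun h => hy.2 (Finset.mem_of_mem_erase h)),
        Finset.card_erase_of_mem hx.1]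
      exact Nat.succ_pred_eq_of_pos (Finset.card_pos.mpr ⟨x, hx.1⟩)
    have hcT : (insert x (T.erase y)).card = T.card := by
      rw [Finset.card_insert_of_notMem (fun h => hx.2 (Finset.mem_of_mem_erase h)),
        Finset.card_erase_of_mem hy.1]
      exact Nat.succ_pred_eq_of_pos (Finset.card_pos.mpr ⟨y, hy.1⟩)
    rw [hf, hf, hf, hf, hcS, hcT]
  · -- not supermodular: S = {0}, T = {0,1}, j = 2
    intro h
    have := h {0} {0, 1} (by decide) 2 (by decide)
    simp [hf] at this
    norm_num at this
  · -- prices 1/2 on {i,j}, 2 elsewhere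
    intro i j hij
    have hmp : ∀ S : Finset (Fin 3),
        (∀ T, f T - ∑ m ∈ T, (if m = i ∨ m = j then (1/2:ℝ) else 2) ≤
          f S - ∑ m ∈ S, (if m = i ∨ m = j then (1/2:ℝ) else 2)) → (S = ∅ ∨ S = {i, j}) := by
      intro S h
      by_contra hS
      push_neg at hS
      fin_cases i <;> fin_cases j <;> simp_all <;>
        fin_cases S <;> simp_all [hf] <;>
          first
          | exact absurd (by decide) hS.2
          | exact absurd (by decide) hS
          | { have := h ∅; simp [hf] at this; norm_num at this }
          | { have := h {0, 1}; simp [hf, Finset.sum_pair] at this; norm_num at this }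
          | { have := h {0, 2}; simp [hf, Finset.sum_pair] at this; norm_num at this }
          | { have := h {1, 2}; simp [hf, Finset.sum_pair] at this; norm_num at this }
    set p : Fin 3 → ℝ := fun m => if m = i ∨ m = j then 1/2 else 2 with hp
    have hpge : ∀ m : Fin 3, (1/2 : ℝ) ≤ p m := by
      intro m; rw [hp]; dsimp only; split_ifs <;> norm_num
    have key : ∀ T : Finset (Fin 3), f T - ∑ m ∈ T, p m ≤ 0 := by
      intro T
      rw [hf]
      split_ifs with h
      · have h1 : (T.card : ℝ) * (1/2) ≤ ∑ m ∈ T, p m := by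
          simpa using Finset.card_nsmul_le_sum T p (1/2) (fun m _ => hpge m)
        have h2 : (2 : ℝ) ≤ (T.card : ℝ) := by exact_mod_cast h
        linarith
      · have h1 : (0:ℝ) ≤ ∑ m ∈ T, p m :=
          Finset.sum_nonneg fun m _ => le_trans (by norm_num) (hpge m)
        linarith
    have hsumij : ∑ m ∈ ({i, j} : Finset (Fin 3)), p m = 1 := by
      rw [Finset.sum_pair hij, hp]
      simp; norm_num
    have hfij : f {i, j} = 1 := by
      rw [hf, if_pos]
      rw [Finset.card_pair hij]
    refine ⟨p, fun S => ⟨hmp S, ?_⟩⟩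
    rintro (rfl | rfl) T
    · have h0 : f (∅ : Finset (Fin 3)) = 0 := by rw [hf]; simp
      rw [h0, Finset.sum_empty]
      simpa using key T
    · rw [hfij, hsumij]
      simpa using key T
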